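/- Fix u, k, ω, σ > 0, and for λ > 0 define M(β; λ) := ½u²k [ sin(ωβ) exp(−½k²σ²(β + λ^{−1}(1 − e^{−λβ}))) − λ ∫₀^∞ exp(−λα − ½k²σ²(α + β + λ^{−1})) sin(ω(α+β)) sinh((k²σ²/(2λ)) e^{−λ(α+β)}) dα ]. Then ∫₀^∞ M(β; λ) dβ → ½u²kω / (k⁴σ⁴ + ω²) as λ → 0⁺. -/

import Mathlib

open MeasureTheory Real Set

open Filter Topology


lemma myIntegral_exp_neg_mul {b : ℝ} (hb : 0 < b) :
    ∫ x in Ioi (0:ℝ), Real.exp (-(b * x)) = 1 / b := by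
  have := integral_comp_mul_left_Ioi (fun x => Real.exp (-x)) 0 hb
  simp only [mul_zero, integral_exp_neg_Ioi, neg_zero, Real.exp_zero, smul_eq_mul, mul_one] at this
  rw [show (fun x : ℝ => Real.exp (-(b * x))) = fun x : ℝ => Real.exp (-(b * x)) from rfl]
  calc ∫ x in Ioi (0:ℝ), Real.exp (-(b * x)) = b⁻¹ := this
    _ = 1 / b := (one_div b).symm

lemma myIntegral_exp_neg_mul_sin {a : ℝ} (b : ℝ) (ha : 0 < a) :
    ∫ x in Ioi (0:ℝ), Real.exp (-(a * x)) * Real.sin (b * x) = b / (a ^ 2 + b ^ 2) := by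
  have hab : (0:ℝ) < a ^ 2 + b ^ 2 := by positivity
  set F : ℝ → ℝ := fun x =>
    -(Real.exp (-(a * x)) * (a * Real.sin (b * x) + b * Real.cos (b * x))) / (a ^ 2 + b ^ 2)
    with hF
  have hderiv : ∀ x ∈ Ici (0:ℝ), HasDerivAt F (Real.exp (-(a * x)) * Real.sin (b * x)) x := by
    intro x _
    have he : HasDerivAt (fun x : ℝ => Real.exp (-(a * x))) (Real.exp (-(a * x)) * -(a * 1)) x :=
      (((hasDerivAt_id x).const_mul a).neg).exp
    have hs : HasDerivAt (fun x : ℝ => Real.sin (b * x)) (Real.cos (b * x) * (b * 1)) x :=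
      ((hasDerivAt_id x).const_mul b).sin
    have hc : HasDerivAt (fun x : ℝ => Real.cos (b * x)) (-Real.sin (b * x) * (b * 1)) x :=
      ((hasDerivAt_id x).const_mul b).cos
    have := ((he.mul ((hs.const_mul a).add (hc.const_mul b))).neg).div_const (a ^ 2 + b ^ 2)
    refine this.congr_deriv ?_
    simp only [Pi.add_apply]
    field_simp
    ring
  have hint : IntegrableOn (fun x => Real.exp (-(a * x)) * Real.sin (b * x)) (Ioi (0:ℝ)) := by
    refine (exp_neg_integrableOn_Ioi 0 ha).mono' ?_ ?_
    · exact (Real.continuous_exp.comp (by continuity)).mul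
        (Real.continuous_sin.comp (by continuity)) |>.aestronglyMeasurable
    · filter_upwards with x
      rw [norm_mul, Real.norm_eq_abs, Real.norm_eq_abs, Real.abs_exp, neg_mul]
      exact mul_le_of_le_one_right (Real.exp_pos _).le (abs_sin_le_one _)
  have htend : Tendsto F atTop (𝓝 0) := by
    refine squeeze_zero_norm (a := fun x => Real.exp (-(a * x)) * ((a + |b|) / (a ^ 2 + b ^ 2))) ?_ ?_
    · intro x
      rw [hF]
      simp only [Real.norm_eq_abs, abs_div, abs_neg, abs_mul, Real.abs_exp,
        abs_of_pos hab]
      rw [div_le_iff₀ hab]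
      have h1 : |a * Real.sin (b * x) + b * Real.cos (b * x)| ≤ a + |b| := by
        calc |a * Real.sin (b * x) + b * Real.cos (b * x)|
            ≤ |a * Real.sin (b * x)| + |b * Real.cos (b * x)| := abs_add_le _ _
          _ ≤ a * 1 + |b| * 1 := by
              rw [abs_mul, abs_mul, abs_of_pos ha]
              gcongr
              exacts [abs_sin_le_one _, abs_cos_le_one _]
          _ = a + |b| := by ring
      calc Real.exp (-(a * x)) * |a * Real.sin (b * x) + b * Real.cos (b * x)|
          ≤ Real.exp (-(a * x)) * (a + |b|) := mul_le_mul_of_nonneg_left h1 (Real.exp_pos _).le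
        _ = Real.exp (-(a * x)) * ((a + |b|) / (a ^ 2 + b ^ 2)) * (a ^ 2 + b ^ 2) := by
            field_simp
    · have : Tendsto (fun x : ℝ => Real.exp (-(a * x))) atTop (𝓝 0) :=
        Real.tendsto_exp_neg_atTop_nhds_zero.comp (tendsto_id.const_mul_atTop ha)
      simpa using this.mul_const ((a + |b|) / (a ^ 2 + b ^ 2))
  have := integral_Ioi_of_hasDerivAt_of_tendsto' hderiv hint htend
  rw [this, hF]
  simp [Real.sin_zero, Real.cos_zero]
  ring

lemma myInner_norm_le (ω : ℝ) {c l β : ℝ} (hc : 0 < c) (hl : 0 < l) (hβ : 0 ≤ β) :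
    ‖∫ α in Ioi (0:ℝ), Real.exp (-(l * α) - c * (α + β + l⁻¹)) * Real.sin (ω * (α + β)) *
        Real.sinh (c / l * Real.exp (-(l * (α + β))))‖
      ≤ Real.exp (-(c * β)) / (2 * (l + c)) := by
  have hlc : 0 < l + c := by linarith
  have hbound : IntegrableOn
      (fun α => Real.exp (-(c * β)) / 2 * Real.exp (-((l + c) * α))) (Ioi (0:ℝ)) := by
    have h0 := (exp_neg_integrableOn_Ioi 0 hlc).const_mul (Real.exp (-(c * β)) / 2)
    exact h0.congr (Filter.Eventually.of_forall fun x => by simp only []; rw [neg_mul])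
  have hle : ∀ᵐ α ∂(volume.restrict (Ioi (0:ℝ))),
      ‖Real.exp (-(l * α) - c * (α + β + l⁻¹)) * Real.sin (ω * (α + β)) *
        Real.sinh (c / l * Real.exp (-(l * (α + β))))‖
        ≤ Real.exp (-(c * β)) / 2 * Real.exp (-((l + c) * α)) := by
    filter_upwards [ae_restrict_mem measurableSet_Ioi] with α hα
    have hα0 : (0:ℝ) < α := hα
    set x := c / l * Real.exp (-(l * (α + β))) with hxdef
    have hx0 : 0 ≤ x := by positivity
    have hx1 : x ≤ c / l := by
      rw [hxdef]
      have h1 : Real.exp (-(l * (α + β))) ≤ 1 := by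
        rw [Real.exp_le_one_iff]
        nlinarith
      calc c / l * Real.exp (-(l * (α + β))) ≤ c / l * 1 := by
            gcongr
        _ = c / l := mul_one _
    have hsinh : Real.sinh x ≤ Real.exp x / 2 := by
      rw [Real.sinh_eq]
      have := (Real.exp_pos (-x)).le
      linarith
    have hs : |Real.sin (ω * (α + β))| ≤ 1 := abs_sin_le_one _
    rw [norm_mul, norm_mul]
    simp only [Real.norm_eq_abs, Real.abs_exp]
    rw [abs_of_nonneg (Real.sinh_nonneg_iff.mpr hx0)]
    calc Real.exp (-(l * α) - c * (α + β + l⁻¹)) * |Real.sin (ω * (α + β))| * Real.sinh x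
        ≤ Real.exp (-(l * α) - c * (α + β + l⁻¹)) * 1 * (Real.exp x / 2) := by
          have e1 : Real.exp (-(l * α) - c * (α + β + l⁻¹)) * |Real.sin (ω * (α + β))| ≤
              Real.exp (-(l * α) - c * (α + β + l⁻¹)) * 1 :=
            mul_le_mul_of_nonneg_left hs (Real.exp_pos _).le
          calc Real.exp (-(l * α) - c * (α + β + l⁻¹)) * |Real.sin (ω * (α + β))| * Real.sinh x
              ≤ Real.exp (-(l * α) - c * (α + β + l⁻¹)) * 1 * Real.sinh x :=
                mul_le_mul_of_nonneg_right e1 (Real.sinh_nonneg_iff.mpr hx0)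
            _ ≤ Real.exp (-(l * α) - c * (α + β + l⁻¹)) * 1 * (Real.exp x / 2) :=
                mul_le_mul_of_nonneg_left hsinh (by positivity)
      _ = Real.exp (-(l * α) - c * (α + β + l⁻¹) + x) / 2 := by
          rw [Real.exp_add]; ring
      _ ≤ Real.exp (-(c * β) + -((l + c) * α)) / 2 := by
          have hcl : c / l = c * l⁻¹ := div_eq_mul_inv c l
          rw [hcl] at hx1
          have hexp : -(l * α) - c * (α + β + l⁻¹) + x =
              (-(c * β) + -((l + c) * α)) + (x - c * l⁻¹) := by ring
          have hle2 : -(l * α) - c * (α + β + l⁻¹) + x ≤ -(c * β) + -((l + c) * α) := by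
            rw [hexp]; linarith
          have := Real.exp_le_exp.mpr hle2
          linarith
      _ = Real.exp (-(c * β)) / 2 * Real.exp (-((l + c) * α)) := by
          rw [Real.exp_add]; ring
  calc ‖∫ α in Ioi (0:ℝ), Real.exp (-(l * α) - c * (α + β + l⁻¹)) * Real.sin (ω * (α + β)) *
        Real.sinh (c / l * Real.exp (-(l * (α + β))))‖
      ≤ ∫ α in Ioi (0:ℝ), Real.exp (-(c * β)) / 2 * Real.exp (-((l + c) * α)) :=
        norm_integral_le_of_norm_le hbound hle
    _ = Real.exp (-(c * β)) / 2 * (1 / (l + c)) := by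
        rw [MeasureTheory.integral_const_mul, myIntegral_exp_neg_mul hlc]
    _ = Real.exp (-(c * β)) / (2 * (l + c)) := by
        field_simp


/-- The paper's leading-order Stokes'-drift kernel `M(β)` for the elastic dumbbell,
with wave amplitude `u`, wavenumber `k`, frequency `ω`, noise strength `σ`,
and spring constant `l` (the paper's `λ`). -/
noncomputable def stokesKernel (u k ω σ l β : ℝ) : ℝ :=
  (1 / 2) * u ^ 2 * k *
    (Real.sin (ω * β) *
        Real.exp (-(k ^ 2 * σ ^ 2 / 2) * (β + l⁻¹ * (1 - Real.exp (-(l * β))))) -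
      l * ∫ α in Ioi (0 : ℝ),
        Real.exp (-(l * α) - k ^ 2 * σ ^ 2 / 2 * (α + β + l⁻¹)) * Real.sin (ω * (α + β)) *
          Real.sinh (k ^ 2 * σ ^ 2 / (2 * l) * Real.exp (-(l * (α + β)))))

/-- Weak-spring asymptotics of the leading-order Stokes' drift of the elastic
dumbbell: the drift integral tends to the weak-spring value as the spring constant
tends to zero from above. -/

theorem stokesDrift_tendsto_weak_spring (u k ω σ : ℝ)
    (hu : 0 < u) (hk : 0 < k) (hω : 0 < ω) (hσ : 0 < σ) :
    Filter.Tendsto (fun l : ℝ => ∫ β in Ioi (0 : ℝ), stokesKernel u k ω σ l β)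
      (nhdsWithin 0 (Ioi 0))
      (nhds ((1 / 2) * u ^ 2 * k * ω / (k ^ 4 * σ ^ 4 + ω ^ 2))) := by
  have hc : (0:ℝ) < k ^ 2 * σ ^ 2 / 2 := by positivity
  set c : ℝ := k ^ 2 * σ ^ 2 / 2 with hcdef
  -- rewrite the kernel in terms of `c`
  have hker : ∀ l β : ℝ,
      stokesKernel u k ω σ l β =
      (1 / 2) * u ^ 2 * k *
        (Real.sin (ω * β) * Real.exp (-c * (β + l⁻¹ * (1 - Real.exp (-(l * β))))) -
          l * ∫ α in Ioi (0 : ℝ),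
            Real.exp (-(l * α) - c * (α + β + l⁻¹)) * Real.sin (ω * (α + β)) *
              Real.sinh (c / l * Real.exp (-(l * (α + β))))) := by
    intro l β
    have h2l : k ^ 2 * σ ^ 2 / (2 * l) = c / l := by
      rw [hcdef, div_div]
    simp only [stokesKernel, hcdef, h2l]
  -- the limiting integrand
  set f : ℝ → ℝ := fun β => (1 / 2) * u ^ 2 * k *
      (Real.exp (-(2 * c * β)) * Real.sin (ω * β)) with hfdef
  -- value of the limiting integral
  have hIf : ∫ β in Ioi (0:ℝ), f β = (1 / 2) * u ^ 2 * k * ω / (k ^ 4 * σ ^ 4 + ω ^ 2) := by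
    rw [hfdef]
    rw [MeasureTheory.integral_const_mul]
    rw [show (fun β : ℝ => Real.exp (-(2 * c * β)) * Real.sin (ω * β)) =
        fun β : ℝ => Real.exp (-((2 * c) * β)) * Real.sin (ω * β) by ring_nf]
    rw [myIntegral_exp_neg_mul_sin ω (by positivity : (0:ℝ) < 2 * c)]
    rw [hcdef]
    rw [show (2 * (k ^ 2 * σ ^ 2 / 2)) ^ 2 = k ^ 4 * σ ^ 4 by ring]
    rw [mul_div_assoc]
  rw [← hIf]
  refine MeasureTheory.tendsto_integral_filter_of_dominated_convergence
    (fun β => u ^ 2 * k * Real.exp (-(c * β))) ?_ ?_ ?_ ?_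
  · -- measurability
    filter_upwards [self_mem_nhdsWithin] with l (hl : l ∈ Ioi (0:ℝ))
    have hG : Continuous (fun p : ℝ × ℝ =>
        Real.exp (-(l * p.2) - k ^ 2 * σ ^ 2 / 2 * (p.2 + p.1 + l⁻¹)) *
          Real.sin (ω * (p.2 + p.1)) *
          Real.sinh (k ^ 2 * σ ^ 2 / (2 * l) * Real.exp (-(l * (p.2 + p.1))))) := by
      fun_prop
    have hJ : StronglyMeasurable (fun β : ℝ => ∫ α in Ioi (0:ℝ),
        Real.exp (-(l * α) - k ^ 2 * σ ^ 2 / 2 * (α + β + l⁻¹)) * Real.sin (ω * (α + β)) *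
          Real.sinh (k ^ 2 * σ ^ 2 / (2 * l) * Real.exp (-(l * (α + β))))) :=
      hG.stronglyMeasurable.integral_prod_right'
    have hA : Continuous (fun β : ℝ => Real.sin (ω * β) *
        Real.exp (-(k ^ 2 * σ ^ 2 / 2) * (β + l⁻¹ * (1 - Real.exp (-(l * β)))))) := by
      fun_prop
    have : StronglyMeasurable (fun β : ℝ => stokesKernel u k ω σ l β) := by
      unfold stokesKernel
      exact ((hA.stronglyMeasurable.sub (hJ.const_mul l)).const_mul ((1/2) * u ^ 2 * k))
    exact this.aestronglyMeasurable
  · -- uniform bound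
    filter_upwards [self_mem_nhdsWithin] with l (hl : l ∈ Ioi (0:ℝ))
    have hl0 : (0:ℝ) < l := hl
    filter_upwards [ae_restrict_mem measurableSet_Ioi] with β (hβ : β ∈ Ioi (0:ℝ))
    have hβ0 : (0:ℝ) < β := hβ
    rw [hker l β]
    have ht0 : 0 ≤ l⁻¹ * (1 - Real.exp (-(l * β))) := by
      have h1 : Real.exp (-(l * β)) ≤ 1 := by
        rw [Real.exp_le_one_iff]; nlinarith
      have h2 : (0:ℝ) ≤ l⁻¹ := by positivity
      nlinarith
    have hA : ‖Real.sin (ω * β) *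
        Real.exp (-c * (β + l⁻¹ * (1 - Real.exp (-(l * β)))))‖ ≤ Real.exp (-(c * β)) := by
      rw [norm_mul, Real.norm_eq_abs, Real.norm_eq_abs, Real.abs_exp]
      have h1 : |Real.sin (ω * β)| ≤ 1 := abs_sin_le_one _
      have h2 : Real.exp (-c * (β + l⁻¹ * (1 - Real.exp (-(l * β))))) ≤ Real.exp (-(c * β)) := by
        rw [Real.exp_le_exp]; nlinarith
      calc |Real.sin (ω * β)| * Real.exp (-c * (β + l⁻¹ * (1 - Real.exp (-(l * β)))))
          ≤ 1 * Real.exp (-(c * β)) := by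
            exact mul_le_mul h1 h2 (Real.exp_pos _).le zero_le_one
        _ = Real.exp (-(c * β)) := one_mul _
    have hJ := myInner_norm_le ω hc hl0 hβ0.le
    have hJ' : ‖l * ∫ α in Ioi (0 : ℝ),
        Real.exp (-(l * α) - c * (α + β + l⁻¹)) * Real.sin (ω * (α + β)) *
          Real.sinh (c / l * Real.exp (-(l * (α + β))))‖ ≤ Real.exp (-(c * β)) := by
      rw [norm_mul, Real.norm_eq_abs l, abs_of_pos hl0]
      have h1 := mul_le_mul_of_nonneg_left hJ hl0.le
      have h2 : l * (Real.exp (-(c * β)) / (2 * (l + c))) ≤ Real.exp (-(c * β)) := by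
        have h3 : l * (Real.exp (-(c * β)) / (2 * (l + c))) =
            Real.exp (-(c * β)) * (l / (2 * (l + c))) := by ring
        have h4 : l / (2 * (l + c)) ≤ 1 := by
          rw [div_le_one (by positivity)]; linarith
        rw [h3]
        exact mul_le_of_le_one_right (Real.exp_pos _).le h4
      linarith
    rw [norm_mul, Real.norm_eq_abs ((1:ℝ) / 2 * u ^ 2 * k),
      abs_of_pos (by positivity : (0:ℝ) < 1 / 2 * u ^ 2 * k)]
    have h3 := norm_sub_le (Real.sin (ω * β) *
        Real.exp (-c * (β + l⁻¹ * (1 - Real.exp (-(l * β))))))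
      (l * ∫ α in Ioi (0 : ℝ),
        Real.exp (-(l * α) - c * (α + β + l⁻¹)) * Real.sin (ω * (α + β)) *
          Real.sinh (c / l * Real.exp (-(l * (α + β)))))
    have h4 : ‖Real.sin (ω * β) * Real.exp (-c * (β + l⁻¹ * (1 - Real.exp (-(l * β))))) -
        l * ∫ α in Ioi (0 : ℝ),
          Real.exp (-(l * α) - c * (α + β + l⁻¹)) * Real.sin (ω * (α + β)) *
            Real.sinh (c / l * Real.exp (-(l * (α + β))))‖ ≤ 2 * Real.exp (-(c * β)) := by
      linarith
    calc (1:ℝ) / 2 * u ^ 2 * k * ‖_‖ ≤ 1 / 2 * u ^ 2 * k * (2 * Real.exp (-(c * β))) :=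
          mul_le_mul_of_nonneg_left h4 (by positivity)
      _ = u ^ 2 * k * Real.exp (-(c * β)) := by ring
  · -- integrability of the bound
    have h0 := (exp_neg_integrableOn_Ioi 0 hc).const_mul (u ^ 2 * k)
    exact h0.congr (Filter.Eventually.of_forall fun x => by simp only []; rw [neg_mul])
  · -- pointwise limit
    filter_upwards [ae_restrict_mem measurableSet_Ioi] with β (hβ : β ∈ Ioi (0:ℝ))
    have hβ0 : (0:ℝ) < β := hβ
    have hd : HasDerivAt (fun l : ℝ => 1 - Real.exp (-(l * β))) β 0 := by
      have h1 : HasDerivAt (fun l : ℝ => Real.exp (-(l * β)))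
          (Real.exp (-(0 * β)) * -(1 * β)) 0 :=
        (((hasDerivAt_id (0:ℝ)).mul_const β).neg).exp
      have h2 := h1.const_sub 1
      refine h2.congr_deriv ?_
      simp
    have tend1 : Tendsto (fun l : ℝ => l⁻¹ * (1 - Real.exp (-(l * β)))) (𝓝[>] 0) (𝓝 β) := by
      have h3 := hasDerivAt_iff_tendsto_slope.mp hd
      have h4 : Tendsto (slope (fun l : ℝ => 1 - Real.exp (-(l * β))) 0) (𝓝[>] (0:ℝ)) (𝓝 β) :=
        h3.mono_left (nhdsWithin_mono 0 (fun x hx => ne_of_gt hx))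
      refine h4.congr fun l => ?_
      rw [slope_def_field]
      simp [div_eq_inv_mul]
    have tendA : Tendsto (fun l : ℝ => Real.sin (ω * β) *
        Real.exp (-c * (β + l⁻¹ * (1 - Real.exp (-(l * β))))))
        (𝓝[>] 0) (𝓝 (Real.sin (ω * β) * Real.exp (-c * (β + β)))) := by
      have h5 : Tendsto (fun l : ℝ => -c * (β + l⁻¹ * (1 - Real.exp (-(l * β)))))
          (𝓝[>] 0) (𝓝 (-c * (β + β))) := (tendsto_const_nhds.add tend1).const_mul (-c)
      exact tendsto_const_nhds.mul ((Real.continuous_exp.tendsto _).comp h5)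
    have tendB : Tendsto (fun l : ℝ => l * ∫ α in Ioi (0:ℝ),
        Real.exp (-(l * α) - c * (α + β + l⁻¹)) * Real.sin (ω * (α + β)) *
          Real.sinh (c / l * Real.exp (-(l * (α + β))))) (𝓝[>] 0) (𝓝 0) := by
      refine squeeze_zero_norm'
        (a := fun l : ℝ => l * (Real.exp (-(c * β)) / (2 * (l + c)))) ?_ ?_
      · filter_upwards [self_mem_nhdsWithin] with l (hl : l ∈ Ioi (0:ℝ))
        have hl0 : (0:ℝ) < l := hl
        rw [norm_mul, Real.norm_eq_abs l, abs_of_pos hl0]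
        exact mul_le_mul_of_nonneg_left (myInner_norm_le ω hc hl0 hβ0.le) hl0.le
      · have hden : Tendsto (fun l : ℝ => 2 * (l + c)) (𝓝 0) (𝓝 (2 * (0 + c))) :=
          (tendsto_id.add tendsto_const_nhds).const_mul 2
        have h6 : Tendsto (fun l : ℝ => l * (Real.exp (-(c * β)) / (2 * (l + c)))) (𝓝 0)
            (𝓝 (0 * (Real.exp (-(c * β)) / (2 * (0 + c))))) :=
          tendsto_id.mul (tendsto_const_nhds.div hden (by positivity))
        have h7 := h6.mono_left (nhdsWithin_le_nhds (s := Ioi (0:ℝ)))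
        simpa using h7
    have hcomb := (tendA.sub tendB).const_mul ((1:ℝ)/2 * u ^ 2 * k)
    have heq : (1:ℝ)/2 * u ^ 2 * k *
        (Real.sin (ω * β) * Real.exp (-c * (β + β)) - 0) = f β := by
      rw [hfdef]
      rw [sub_zero, show -c * (β + β) = -(2 * c * β) by ring]
      ring
    rw [heq] at hcomb
    exact hcomb.congr fun l => (hker l β).symm
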